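/- For all integers r, f ≥ 0, the one-row flagged factorial Q-function equals a single generating-function coefficient: Q_{(r),(f)}(x;z|b) = q_r^{[f | r−f−1]}(x;z|b), i.e. the sum of weights over all marked shifted tableaux of the one-row flagged strict partition ((r),(f)) equals the coefficient of u^r in q_u(x) · e_u^{[f]}(z) · e_u^{[r−f−1]}(b). The identity holds for every number n of x-variables. -/

import Mathlib

open Finset

noncomputable section

variable {R : Type*} [CommRing R]

/-- The formal power series `1/(1 - x·u)`. -/
def geomSeries (x : R) : PowerSeries R := PowerSeries.mk fun m => x ^ m

/-- `e_u^{[k]}(c)`: the power series `∏_{i=1}^k (1 + c_i u)` for `k ≥ 0`, and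
`∏_{i=1}^{-k} (1 - c_i u)⁻¹` for `k < 0`.  The sequence `c` is read at indices `1, 2, …`. -/
def eSer (k : ℤ) (c : ℕ → R) : PowerSeries R :=
  if 0 ≤ k then ∏ i ∈ Finset.range k.toNat, (1 + PowerSeries.C (c (i + 1)) * PowerSeries.X)
  else ∏ i ∈ Finset.range (-k).toNat, geomSeries (c (i + 1))

/-- `q_u(x) = ∏_{i=1}^n (1 + x_i u)/(1 - x_i u)`, with `n` x-variables. -/
def qSer (n : ℕ) (x : ℕ → R) : PowerSeries R :=
  ∏ i ∈ Finset.range n,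
    ((1 + PowerSeries.C (x (i + 1)) * PowerSeries.X) * geomSeries (x (i + 1)))

/-- The coefficient of `u^m` (`m : ℤ`) of a power series; zero when `m < 0`. -/
def coeffZ (m : ℤ) (φ : PowerSeries R) : R :=
  if 0 ≤ m then PowerSeries.coeff m.toNat φ else 0

/-- `q_m^{[ℓ]}(x|c)`: the coefficient of `u^m` in `q_u(x)·e_u^{[ℓ]}(c)`. -/
def qC (m ℓ : ℤ) (n : ℕ) (x c : ℕ → R) : R := coeffZ m (qSer n x * eSer ℓ c)

/-- `q_m^{[k|ℓ]}(x;z|c)`: the coefficient of `u^m` in `q_u(x)·e_u^{[k]}(z)·e_u^{[ℓ]}(c)`. -/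
def qC2 (m k ℓ : ℤ) (n : ℕ) (x z c : ℕ → R) : R :=
  coeffZ m (qSer n x * eSer k z * eSer ℓ c)

/-- `e_m^{[k]}(c)`. -/
def eC (m k : ℤ) (c : ℕ → R) : R := coeffZ m (eSer k c)

/-- `e_m^{[k|ℓ]}(z|c)`: the coefficient of `u^m` in `e_u^{[k]}(z)·e_u^{[ℓ]}(c)`. -/
def eC2 (m k ℓ : ℤ) (z c : ℕ → R) : R := coeffZ m (eSer k z * eSer ℓ c)

/-- Extension of `b` to all integer indices using the convention `b_{-i} = -b_{i+1}` for
`i ≥ 0`; positive indices are untouched.  This also implements the `⋆` substitution. -/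
def bext (b : ℤ → R) : ℤ → R := fun j => if 0 < j then b j else -b (1 - j)

/-- `ε(0) = 1` and `ε(m) = 2·(-1)^m` for `m ≥ 1`. -/
def pfEps (m : ℕ) : ℤ := if m = 0 then 1 else 2 * (-1) ^ m

/-- The subscript `α_i + Σ_{j>i} m_{ij} − Σ_{j<i} m_{ji}` in the Schur–Pfaffian. -/
def pfIdx {r : ℕ} (α : Fin r → ℤ) (m : Fin r → Fin r → ℕ) (i : Fin r) : ℤ :=
  α i + ∑ j, (if i < j then (m i j : ℤ) else 0) - ∑ j, (if j < i then (m j i : ℤ) else 0)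

/-- The Schur–Pfaffian `Pf[c^{(1)}_{α_1} ⋯ c^{(r)}_{α_r}]`, as the (finitely supported) sum
over tuples of nonnegative integers `(m_{ij})_{1 ≤ i < j ≤ r}`. -/
def schurPf {r : ℕ} (c : Fin r → ℤ → R) (α : Fin r → ℤ) : R :=
  ∑ᶠ m ∈ {m : Fin r → Fin r → ℕ | ∀ i j, ¬ i < j → m i j = 0},
    (∏ i, ∏ j, if i < j then (pfEps (m i j) : R) else 1) * ∏ i, c i (pfIdx α m i)

/-- The alphabet of primed, unmarked and circled numbers. -/
inductive MSTEntry where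
  | prime : ℕ → MSTEntry
  | unmarked : ℕ → MSTEntry
  | circ : ℕ → MSTEntry
deriving DecidableEq

namespace MSTEntry

/-- Whether an entry is circled (`1`) or not (`0`). -/
def isCirc : MSTEntry → ℕ
  | circ _ => 1
  | _ => 0

/-- Key realizing the order `1' < 1 < 2' < 2 < ⋯` within each class. -/
def key : MSTEntry → ℕ
  | prime k => 2 * k - 1
  | unmarked k => 2 * k
  | circ k => k

/-- The numeric value of an entry. -/
def val : MSTEntry → ℕ
  | prime k => k
  | unmarked k => k
  | circ k => k

/-- The total order `1' < 1 < 2' < 2 < ⋯ < 1° < 2° < ⋯` on entries of positive value. -/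
def le (a b : MSTEntry) : Prop :=
  a.isCirc < b.isCirc ∨ (a.isCirc = b.isCirc ∧ a.key ≤ b.key)

end MSTEntry

/-- The shifted Young diagram of a strict partition `λ` of length `r`:
boxes `(i, j)` with `1 ≤ i ≤ r` and `i ≤ j ≤ λ_i + i - 1` (rows and columns 1-indexed). -/
def shiftedDiag (r : ℕ) (lam : ℕ → ℕ) : Set (ℕ × ℕ) :=
  {p | 1 ≤ p.1 ∧ p.1 ≤ r ∧ p.1 ≤ p.2 ∧ p.2 ≤ lam p.1 + p.1 - 1}

/-- `T` is a marked shifted tableau of the flagged strict partition `(λ, f)` whose unmarked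
and primed entries have numeric value at most `n` (normalized to `unmarked 0` off the
diagram). -/
def IsMST (n r : ℕ) (lam f : ℕ → ℕ) (T : ℕ × ℕ → MSTEntry) : Prop :=
  (∀ p, p ∉ shiftedDiag r lam → T p = .unmarked 0) ∧
  (∀ p ∈ shiftedDiag r lam, 1 ≤ (T p).val) ∧
  (∀ i j j', (i, j) ∈ shiftedDiag r lam → (i, j') ∈ shiftedDiag r lam → j ≤ j' →
    (T (i, j)).le (T (i, j'))) ∧
  (∀ i i' j, (i, j) ∈ shiftedDiag r lam → (i', j) ∈ shiftedDiag r lam → i ≤ i' →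
    (T (i, j)).le (T (i', j))) ∧
  (∀ i i' j k k', (i, j) ∈ shiftedDiag r lam → (i', j) ∈ shiftedDiag r lam → i < i' →
    T (i, j) = .unmarked k → T (i', j) = .unmarked k' → k < k') ∧
  (∀ i j j' k k', (i, j) ∈ shiftedDiag r lam → (i, j') ∈ shiftedDiag r lam → j < j' →
    T (i, j) = .prime k → T (i, j') = .prime k' → k < k') ∧
  (∀ i j j' k k', (i, j) ∈ shiftedDiag r lam → (i, j') ∈ shiftedDiag r lam → j < j' →
    T (i, j) = .circ k → T (i, j') = .circ k' → k < k') ∧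
  (∀ p ∈ shiftedDiag r lam, (T p).le (.circ (f p.1))) ∧
  (∀ p ∈ shiftedDiag r lam, ∀ k, (T p = .unmarked k ∨ T p = .prime k) → k ≤ n)

/-- The factor of the weight `(xz|b)^T` contributed by the entry at box `p`.  The convention
`b_{-i} = -b_{i+1}` is implemented by `bext`. -/
def mstFactor (x z : ℕ → R) (b : ℤ → R) (p : ℕ × ℕ) : MSTEntry → R
  | .unmarked k => x k + bext b ((p.2 : ℤ) - (p.1 : ℤ))
  | .prime k => x k - bext b ((p.2 : ℤ) - (p.1 : ℤ))
  | .circ k => z k + bext b ((k : ℤ) + (p.1 : ℤ) - (p.2 : ℤ))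

/-- The weight `(xz|b)^T` of a marked shifted tableau. -/
def mstWeight (r : ℕ) (lam : ℕ → ℕ) (x z : ℕ → R) (b : ℤ → R) (T : ℕ × ℕ → MSTEntry) : R :=
  ∏ i ∈ Finset.range r, ∏ j ∈ Finset.range (lam (i + 1)),
    mstFactor x z b (i + 1, i + 1 + j) (T (i + 1, i + 1 + j))

/-- The flagged factorial Q-function `Q_{λ,f}(x;z|b)`, with `n` x-variables. -/
def Qflag (n r : ℕ) (lam f : ℕ → ℕ) (x z : ℕ → R) (b : ℤ → R) : R :=
  ∑ᶠ T ∈ {T : ℕ × ℕ → MSTEntry | IsMST n r lam f T}, mstWeight r lam x z b T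

/-- Ivanov's factorial Q-function `Q_λ(x|b)`: the case of the zero flag (no circled
entries, so the z-variables do not occur). -/
def QIvanov (n r : ℕ) (lam : ℕ → ℕ) (x : ℕ → R) (b : ℤ → R) : R :=
  Qflag n r lam (fun _ => 0) x (fun _ => 0) b

/-- The skew Young diagram `κ/ν`: boxes `(i, j)` with `1 ≤ i ≤ r`, `ν_i < j ≤ κ_i`. -/
def skewDiag (r : ℕ) (kap nu : ℕ → ℕ) : Set (ℕ × ℕ) :=
  {p | 1 ≤ p.1 ∧ p.1 ≤ r ∧ nu p.1 < p.2 ∧ p.2 ≤ kap p.1}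

/-- `t` is a row-strict flagged tableau of `(κ/ν, f)` (normalized to `0` off the diagram). -/
def IsRST (r : ℕ) (kap nu f : ℕ → ℕ) (t : ℕ × ℕ → ℕ) : Prop :=
  (∀ p, p ∉ skewDiag r kap nu → t p = 0) ∧
  (∀ p ∈ skewDiag r kap nu, 1 ≤ t p) ∧
  (∀ i j j', (i, j) ∈ skewDiag r kap nu → (i, j') ∈ skewDiag r kap nu → j < j' →
    t (i, j) < t (i, j')) ∧
  (∀ i i' j, (i, j) ∈ skewDiag r kap nu → (i', j) ∈ skewDiag r kap nu → i ≤ i' →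
    t (i, j) ≤ t (i', j)) ∧
  (∀ p ∈ skewDiag r kap nu, t p ≤ f p.1)

/-- The weight `∏_{e ∈ T} (z_{|e|} + b_{|e| + r(e) - c(e)})` of a row-strict flagged tableau. -/
def rstWeight (r : ℕ) (kap nu : ℕ → ℕ) (z : ℕ → R) (b : ℤ → R) (t : ℕ × ℕ → ℕ) : R :=
  ∏ i ∈ Finset.range r, ∏ j ∈ Finset.range (kap (i + 1) - nu (i + 1)),
    (z (t (i + 1, nu (i + 1) + 1 + j)) +
      b ((t (i + 1, nu (i + 1) + 1 + j) : ℤ) + ((i : ℤ) + 1) - ((nu (i + 1) : ℤ) + 1 + (j : ℤ))))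

/-- The row-strict flagged skew factorial Schur polynomial `s̃_{κ/ν,f}(z|b)`. -/
def sTilde (r : ℕ) (kap nu f : ℕ → ℕ) (z : ℕ → R) (b : ℤ → R) : R :=
  ∑ᶠ t ∈ {t : ℕ × ℕ → ℕ | IsRST r kap nu f t}, rstWeight r kap nu z b t





section Work
open PowerSeries
variable {R : Type*} [CommRing R]
theorem geom_eq (a : R) : geomSeries a = 1 + C a * X * geomSeries a := by
  ext m
  cases m with
  | zero => simp [geomSeries]
  | succ k =>
    rw [mul_comm (C a) X, mul_assoc, mul_comm X]
    simp [geomSeries, coeff_succ_mul_X, pow_succ, mul_comm]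

theorem coeff_mul_lin (φ : PowerSeries R) (a : R) (s : ℕ) :
    (PowerSeries.coeff (s+1)) (φ * (1 + C a * X)) =
      coeff (s+1) φ + a * coeff s φ := by
  rw [mul_add, mul_one, map_add, mul_comm (C a) X, ← mul_assoc, coeff_mul_C,
    coeff_succ_mul_X, mul_comm]

theorem geom_inv (a : R) : geomSeries a * (1 - C a * X) = 1 := by
  ext m
  cases m with
  | zero => simp [geomSeries]
  | succ k =>
    rw [mul_sub, mul_one, map_sub, mul_comm (C a) X, ← mul_assoc, coeff_mul_C,
      coeff_succ_mul_X]
    simp [geomSeries, pow_succ, mul_comm]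

theorem coeff_mul_geom (φ : PowerSeries R) (a : R) (s : ℕ) :
    coeff (s+1) (φ * geomSeries a) = coeff (s+1) φ + a * coeff s (φ * geomSeries a) := by
  conv_lhs => rw [geom_eq a, mul_add, mul_one, map_add]
  have : φ * (C a * X * geomSeries a) = φ * geomSeries a * X * C a := by ring
  rw [this, coeff_mul_C, coeff_succ_mul_X, mul_comm]

theorem coeff_prod_lin_high (t : ℕ) (c : ℕ → R) (k : ℕ) (h : t < k) :
    coeff k (∏ i ∈ Finset.range t, (1 + C (c i) * X)) = 0 := by
  induction t generalizing k with
  | zero => simp [coeff_one]; omega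
  | succ t ih =>
    rw [prod_range_succ]
    obtain ⟨k, rfl⟩ : ∃ m, k = m + 1 := ⟨k - 1, by omega⟩
    rw [coeff_mul_lin, ih _ (by omega), ih _ (by omega), mul_zero, add_zero]
theorem eSer_ofNat (t : ℕ) (c : ℕ → R) :
    eSer (t : ℤ) c = ∏ i ∈ Finset.range t, (1 + C (c (i + 1)) * X) := by
  simp [eSer]

theorem eSer_neg (t : ℕ) (c : ℕ → R) :
    eSer (-(t : ℤ)) c = ∏ i ∈ Finset.range t, geomSeries (c (i + 1)) := by
  rcases Nat.eq_zero_or_pos t with rfl | ht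
  · simp [eSer]
  · rw [eSer, if_neg (by omega)]
    simp

theorem coeffZ_natCast (m : ℕ) (φ : PowerSeries R) : coeffZ (m : ℤ) φ = coeff m φ := by
  simp [coeffZ]

theorem constCoeff_geom (a : R) : constantCoeff (geomSeries a) = 1 := by
  simp [geomSeries, ← coeff_zero_eq_constantCoeff]

theorem coeffZ_zero_eq_one (φ ψ χ : PowerSeries R)
    (h1 : constantCoeff φ = 1) (h2 : constantCoeff ψ = 1) (h3 : constantCoeff χ = 1) :
    coeffZ 0 (φ * ψ * χ) = 1 := by
  simp [coeffZ, coeff_zero_eq_constantCoeff, h1, h2, h3]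

theorem constCoeff_eSer (k : ℤ) (c : ℕ → R) : constantCoeff (eSer k c) = 1 := by
  rw [eSer]
  split <;> rw [map_prod] <;> exact prod_eq_one (fun i _ => by
    first
    | simp
    | exact constCoeff_geom _

  )

theorem constCoeff_qSer (n : ℕ) (x : ℕ → R) : constantCoeff (qSer n x) = 1 := by
  rw [qSer, map_prod]
  exact prod_eq_one fun i _ => by rw [map_mul, constCoeff_geom]; simp


namespace MSTEntry
instance decLe (a b : MSTEntry) : Decidable (a.le b) := by unfold le; infer_instance

theorem le_refl (a : MSTEntry) : a.le a := Or.inr ⟨rfl, Nat.le_refl _⟩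

theorem le_trans {a b c : MSTEntry} (h1 : a.le b) (h2 : b.le c) : a.le c := by
  unfold le at *; omega

/-- The largest entry allowed strictly before `e` in a row (given `1 ≤ e.val`). -/
def pred : MSTEntry → MSTEntry
  | prime k => unmarked (k - 1)
  | unmarked k => unmarked k
  | circ k => circ (k - 1)

/-- Validity of an entry: positive value, and non-circled values at most `n`. -/
def valid (n : ℕ) : MSTEntry → Prop
  | prime k => 1 ≤ k ∧ k ≤ n
  | unmarked k => 1 ≤ k ∧ k ≤ n
  | circ k => 1 ≤ k

instance decValid (n : ℕ) (e : MSTEntry) : Decidable (e.valid n) := by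
  unfold valid; cases e <;> infer_instance

theorem pred_le {e : MSTEntry} (h : 1 ≤ e.val) : (pred e).le e := by
  cases e <;> simp [le, pred, key, isCirc, val] at * <;> omega

theorem le_pred_iff {a b : MSTEntry} (ha : 1 ≤ a.val) (hb : 1 ≤ b.val) :
    a.le (pred b) ↔ a.le b ∧ (∀ k k', a = prime k → b = prime k' → k < k') ∧
      (∀ k k', a = circ k → b = circ k' → k < k') := by
  cases a <;> cases b <;>
    simp [le, pred, key, isCirc, val] at * <;> omega

end MSTEntry


theorem exists_succ_eq {n a : ℕ} : (∃ k, k < n ∧ k + 1 = a) ↔ 1 ≤ a ∧ a ≤ n :=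
  ⟨fun ⟨k, h1, h2⟩ => by omega, fun ⟨h1, h2⟩ => ⟨a - 1, by omega, by omega⟩⟩

def cval : MSTEntry → ℕ
  | .circ m => m
  | _ => 0

def allowedSet (n : ℕ) (ub : MSTEntry) : Finset MSTEntry :=
  (((Finset.range n).image fun k => MSTEntry.prime (k+1)) ∪
   ((Finset.range n).image fun k => MSTEntry.unmarked (k+1)) ∪
   ((Finset.range (cval ub)).image fun k => MSTEntry.circ (k+1))).filter fun e => e.le ub

theorem mem_allowedSet {n : ℕ} {ub e : MSTEntry} :
    e ∈ allowedSet n ub ↔ e.valid n ∧ e.le ub := by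
  simp only [allowedSet, mem_filter, mem_union, mem_image, mem_range]
  cases e <;> cases ub <;>
    simp [MSTEntry.valid, MSTEntry.le, MSTEntry.key, MSTEntry.isCirc, cval, exists_succ_eq] <;> omega

theorem allowed_circ_zero (n : ℕ) : allowedSet n (.circ 0) = allowedSet n (.unmarked n) := by
  ext e
  simp only [mem_allowedSet]
  cases e <;> simp [MSTEntry.valid, MSTEntry.le, MSTEntry.key, MSTEntry.isCirc] <;> omega

theorem allowed_un_zero (n : ℕ) : allowedSet n (.unmarked 0) = ∅ := by
  ext e
  simp only [mem_allowedSet, Finset.notMem_empty, iff_false]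
  cases e <;> simp [MSTEntry.valid, MSTEntry.le, MSTEntry.key, MSTEntry.isCirc] <;> omega

theorem allowed_circ_succ (n f : ℕ) :
    allowedSet n (.circ (f+1)) = insert (.circ (f+1)) (allowedSet n (.circ f)) := by
  ext e
  simp only [mem_allowedSet, Finset.mem_insert]
  cases e <;> simp [MSTEntry.valid, MSTEntry.le, MSTEntry.key, MSTEntry.isCirc,
    MSTEntry.circ.injEq] <;> omega

theorem allowed_un_succ {n m : ℕ} (h : m + 1 ≤ n) :
    allowedSet n (.unmarked (m+1)) =
      insert (.prime (m+1)) (insert (.unmarked (m+1)) (allowedSet n (.unmarked m))) := by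
  ext e
  simp only [mem_allowedSet, Finset.mem_insert]
  cases e <;> simp [MSTEntry.valid, MSTEntry.le, MSTEntry.key, MSTEntry.isCirc,
    MSTEntry.prime.injEq, MSTEntry.unmarked.injEq] <;> omega

def Dfun (n : ℕ) (x z : ℕ → R) (b : ℤ → R) : ℕ → MSTEntry → R
  | 0, _ => 1
  | s+1, ub => ∑ e ∈ allowedSet n ub,
      mstFactor x z b (1, s+1) e * Dfun n x z b s (MSTEntry.pred e)

theorem Dfun_circ_zero (n : ℕ) (x z : ℕ → R) (b : ℤ → R) (s : ℕ) :
    Dfun n x z b s (.circ 0) = Dfun n x z b s (.unmarked n) := by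
  cases s with
  | zero => rfl
  | succ s => rw [Dfun, Dfun, allowed_circ_zero]

theorem Dfun_un_zero (n : ℕ) (x z : ℕ → R) (b : ℤ → R) (s : ℕ) :
    Dfun n x z b (s+1) (.unmarked 0) = 0 := by
  rw [Dfun, allowed_un_zero, Finset.sum_empty]

theorem Dfun_circ_succ (n : ℕ) (x z : ℕ → R) (b : ℤ → R) (s f : ℕ) :
    Dfun n x z b (s+1) (.circ (f+1)) =
      Dfun n x z b (s+1) (.circ f) +
        (z (f+1) + bext b ((f:ℤ) + 1 - (s:ℤ))) * Dfun n x z b s (.circ f) := by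
  have notmem : (MSTEntry.circ (f+1)) ∉ allowedSet n (.circ f) := by
    simp [mem_allowedSet, MSTEntry.le, MSTEntry.key, MSTEntry.isCirc]
  rw [Dfun, Dfun, allowed_circ_succ, Finset.sum_insert notmem]
  simp only [mstFactor, MSTEntry.pred, Nat.add_sub_cancel]
  rw [show ((f+1 : ℕ) : ℤ) + ((1:ℕ):ℤ) - ((s+1 : ℕ):ℤ) = (f:ℤ) + 1 - (s:ℤ) by push_cast; ring]
  ring

theorem Dfun_un_succ {n m : ℕ} (h : m + 1 ≤ n) (x z : ℕ → R) (b : ℤ → R) (s : ℕ) :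
    Dfun n x z b (s+1) (.unmarked (m+1)) =
      Dfun n x z b (s+1) (.unmarked m) +
        (x (m+1) + bext b (s:ℤ)) * Dfun n x z b s (.unmarked (m+1)) +
        (x (m+1) - bext b (s:ℤ)) * Dfun n x z b s (.unmarked m) := by
  have nm1 : (MSTEntry.prime (m+1)) ∉
      insert (MSTEntry.unmarked (m+1)) (allowedSet n (.unmarked m)) := by
    simp [mem_allowedSet, MSTEntry.le, MSTEntry.key, MSTEntry.isCirc]
    omega
  have nm2 : (MSTEntry.unmarked (m+1)) ∉ allowedSet n (.unmarked m) := by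
    simp [mem_allowedSet, MSTEntry.le, MSTEntry.key, MSTEntry.isCirc]
  rw [Dfun, Dfun, allowed_un_succ h, Finset.sum_insert nm1, Finset.sum_insert nm2]
  simp only [mstFactor, MSTEntry.pred, Nat.add_sub_cancel]
  rw [show ((s+1 : ℕ):ℤ) - ((1:ℕ):ℤ) = (s:ℤ) by push_cast; ring]
  ring

section Algebra
open PowerSeries

theorem eSer_zero (c : ℕ → R) : eSer 0 c = 1 := by simp [eSer]

theorem coeff_mul_lin_sub (φ : PowerSeries R) (a : R) (s : ℕ) :
    coeff (s+1) (φ * (1 - C a * X)) = coeff (s+1) φ - a * coeff s φ := by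
  rw [mul_sub, mul_one, map_sub, mul_comm (C a) X, ← mul_assoc, coeff_mul_C,
    coeff_succ_mul_X, mul_comm]

theorem qSer_succ (m : ℕ) (x : ℕ → R) :
    qSer (m+1) x = qSer m x * ((1 + C (x (m+1)) * X) * geomSeries (x (m+1))) :=
  Finset.prod_range_succ _ _

theorem key_un' (a : R) (K : PowerSeries R) (s : ℕ) :
    coeff (s+1) (K * ((1 + C a * X) * geomSeries a)) =
      coeff (s+1) K + a * coeff s (K * ((1 + C a * X) * geomSeries a)) +
        a * coeff s K := by
  have h1 : K * ((1 + C a * X) * geomSeries a) * (1 - C a * X)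
      = K * (1 + C a * X) := by
    rw [show K * ((1 + C a * X) * geomSeries a) * (1 - C a * X)
        = K * (1 + C a * X) * (geomSeries a * (1 - C a * X)) from by ring,
      geom_inv, mul_one]
  have h2 := congrArg (coeff (s+1)) h1
  rw [coeff_mul_lin_sub, coeff_mul_lin] at h2
  linear_combination h2

/-- `∏_{i=1}^t (1 + b_i u)` for integer-indexed `b`. -/
def EB (b : ℤ → R) (t : ℕ) : PowerSeries R :=
  ∏ i ∈ Finset.range t, (1 + C (b ((i + 1 : ℕ) : ℤ)) * X)

theorem EB_eq_eSer (b : ℤ → R) (t : ℕ) : EB b t = eSer (t : ℤ) (fun i => b (i : ℤ)) := by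
  rw [eSer_ofNat]; rfl

theorem coeff_zero_mul_one (φ ψ : PowerSeries R)
    (h1 : constantCoeff φ = 1) (h2 : constantCoeff ψ = 1) :
    coeff 0 (φ * ψ) = 1 := by
  rw [coeff_zero_eq_constantCoeff, map_mul, h1, h2, mul_one]

theorem constCoeff_EB (b : ℤ → R) (t : ℕ) : constantCoeff (EB b t) = 1 := by
  rw [EB, map_prod]
  exact Finset.prod_eq_one fun i _ => by simp

theorem Dfun_un_eq {n m : ℕ} (hm : m ≤ n) (x z : ℕ → R) (b : ℤ → R) :
    ∀ s, Dfun n x z b s (.unmarked m) = coeff s (qSer m x * EB b (s-1)) := by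
  induction m with
  | zero =>
    intro s
    cases s with
    | zero =>
      show (1 : R) = _
      rw [coeff_zero_mul_one _ _ (constCoeff_qSer 0 x) (constCoeff_EB b _)]
    | succ s =>
      rw [Dfun_un_zero, show s+1-1 = s from rfl, show qSer 0 x = 1 from rfl, one_mul, EB,
        coeff_prod_lin_high s _ (s+1) (by omega)]
  | succ m ih =>
    intro s
    induction s with
    | zero =>
      show (1 : R) = _
      rw [coeff_zero_mul_one _ _ (constCoeff_qSer (m+1) x) (constCoeff_EB b _)]
    | succ s ihs =>
      rw [Dfun_un_succ (by omega) x z b s, ih (by omega) (s+1), ih (by omega) s, ihs,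
        show s+1-1 = s from rfl]
      set a := x (m+1) with ha
      cases s with
      | zero =>
        simp only [Nat.zero_sub]
        have h1 : qSer (m+1) x * EB b 0 = (qSer m x * EB b 0) * ((1 + C a * X) * geomSeries a) := by
          rw [qSer_succ]; ring
        have h2 := key_un' a (qSer m x * EB b 0) 0
        rw [← h1] at h2
        have c1 : coeff 0 (qSer (m+1) x * EB b 0) = 1 :=
          coeff_zero_mul_one _ _ (constCoeff_qSer (m+1) x) (constCoeff_EB b 0)
        have c2 : coeff 0 (qSer m x * EB b 0) = 1 :=
          coeff_zero_mul_one _ _ (constCoeff_qSer m x) (constCoeff_EB b 0)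
        rw [c1, c2] at h2 ⊢
        linear_combination -h2
      | succ t =>
        rw [show t+1-1 = t from rfl]
        have hβ : bext b ((t+1 : ℕ) : ℤ) = b ((t+1 : ℕ) : ℤ) := by
          rw [bext, if_pos (by omega)]
        have hEB : EB b (t+1) = EB b t * (1 + C (b ((t+1 : ℕ) : ℤ)) * X) :=
          Finset.prod_range_succ _ _
        have e1 : qSer (m+1) x * EB b (t+1)
            = (qSer (m+1) x * EB b t) * (1 + C (b ((t+1:ℕ):ℤ)) * X) := by rw [hEB]; ring
        have e2 : qSer m x * EB b (t+1)
            = (qSer m x * EB b t) * (1 + C (b ((t+1:ℕ):ℤ)) * X) := by rw [hEB]; ring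
        have e3 : qSer (m+1) x * EB b t = (qSer m x * EB b t) * ((1 + C a * X) * geomSeries a) := by
          rw [qSer_succ]; ring
        have h2 := key_un' a (qSer m x * EB b t) (t+1)
        rw [← e3] at h2
        rw [e1, e2, coeff_mul_lin, coeff_mul_lin, hβ]
        linear_combination -h2
theorem key_circ (Ψ : PowerSeries R) (b : ℤ → R) (l : ℤ) (s : ℕ) :
    coeff (s+1) (Ψ * eSer l (fun i => b (i : ℤ))) =
      coeff (s+1) (Ψ * eSer (l+1) (fun i => b (i : ℤ))) +
        bext b (-l) * coeff s (Ψ * eSer l (fun i => b (i : ℤ))) := by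
  rcases le_or_gt 0 l with hl | hl
  · obtain ⟨t, rfl⟩ := Int.eq_ofNat_of_zero_le hl
    have h1 : eSer ((t:ℤ)+1) (fun i => b (i : ℤ))
        = eSer (t:ℤ) (fun i => b (i : ℤ)) * (1 + C (b ((t+1:ℕ):ℤ)) * X) := by
      rw [show ((t:ℤ)+1) = ((t+1:ℕ):ℤ) by push_cast; ring, eSer_ofNat, eSer_ofNat,
        Finset.prod_range_succ]
    have hb : bext b (-(t:ℤ)) = - b ((t+1:ℕ):ℤ) := by
      rw [bext, if_neg (by omega)]
      congr 1
      push_cast; ring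
    rw [h1, ← mul_assoc, coeff_mul_lin, hb]
    ring
  · obtain ⟨t, rfl⟩ : ∃ t : ℕ, l = -((t:ℤ)+1) := ⟨(-l-1).toNat, by omega⟩
    have h1 : eSer (-((t:ℤ)+1)) (fun i => b (i : ℤ))
        = eSer (-((t:ℤ)+1)+1) (fun i => b (i : ℤ)) * geomSeries (b ((t+1:ℕ):ℤ)) := by
      rw [show (-((t:ℤ)+1)+1) = -((t:ℕ):ℤ) by push_cast; ring,
        show (-((t:ℤ)+1)) = -((t+1:ℕ):ℤ) by push_cast; ring, eSer_neg, eSer_neg,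
        Finset.prod_range_succ]
    have hb : bext b (-(-((t:ℤ)+1))) = b ((t+1:ℕ):ℤ) := by
      rw [bext, if_pos (by omega)]
      congr 1
      try push_cast
      try ring
    rw [h1, ← mul_assoc, coeff_mul_geom, hb, mul_assoc, ← h1]

theorem Dfun_circ_eq (n : ℕ) (x z : ℕ → R) (b : ℤ → R) :
    ∀ f s : ℕ, Dfun n x z b s (.circ f) =
      coeff s (qSer n x * eSer (f:ℤ) z * eSer ((s:ℤ)-(f:ℤ)-1) (fun i => b (i : ℤ))) := by
  intro f
  induction f with
  | zero =>
    intro s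
    rw [Dfun_circ_zero, Dfun_un_eq le_rfl x z b s]
    cases s with
    | zero =>
      rw [coeff_zero_mul_one _ _ (constCoeff_qSer n x) (constCoeff_EB b _),
        coeff_zero_eq_constantCoeff, map_mul, map_mul, constCoeff_qSer, constCoeff_eSer,
        constCoeff_eSer, mul_one, mul_one]
    | succ s =>
      rw [show ((0:ℕ):ℤ) = (0:ℤ) from rfl, eSer_zero, mul_one,
        show (((s+1:ℕ)):ℤ) - (0:ℤ) - 1 = ((s:ℕ):ℤ) by push_cast; ring,
        show s+1-1 = s from rfl, EB_eq_eSer]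
  | succ f ihf =>
    intro s
    cases s with
    | zero =>
      show (1 : R) = _
      rw [coeff_zero_eq_constantCoeff, map_mul, map_mul, constCoeff_qSer, constCoeff_eSer,
        constCoeff_eSer, mul_one, mul_one]
    | succ s =>
      rw [Dfun_circ_succ, ihf (s+1), ihf s]
      set b' : ℕ → R := fun i => b (i : ℤ) with hb'
      set a := z (f+1) with ha
      set l : ℤ := (s:ℤ) - (f:ℤ) - 1 with hl
      have hz : eSer ((f+1:ℕ):ℤ) z = eSer ((f:ℕ):ℤ) z * (1 + C a * X) := by
        rw [show ((f+1:ℕ):ℤ) = (((f:ℕ):ℤ)+1) by push_cast; ring,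
          show (((f:ℕ):ℤ)+1) = ((f+1:ℕ):ℤ) by push_cast; ring, eSer_ofNat, eSer_ofNat,
          Finset.prod_range_succ, ha]
      have e0 : ((s+1:ℕ):ℤ) - ((f+1:ℕ):ℤ) - 1 = l := by rw [hl]; push_cast; ring
      have e1 : ((s+1:ℕ):ℤ) - ((f:ℕ):ℤ) - 1 = l + 1 := by rw [hl]; push_cast; ring
      have e2 : (f:ℤ) + 1 - (s:ℤ) = -l := by rw [hl]; ring
      rw [e0, e1, e2, hz]
      have e3 : qSer n x * (eSer ((f:ℕ):ℤ) z * (1 + C a * X)) * eSer l b'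
          = (qSer n x * eSer ((f:ℕ):ℤ) z * eSer l b') * (1 + C a * X) := by ring
      rw [e3, coeff_mul_lin]
      have h2 := key_circ (qSer n x * eSer ((f:ℕ):ℤ) z) b l s
      rw [← hb'] at h2
      linear_combination -h2

end Algebra

section Words
open MSTEntry

theorem MSTEntry.valid_val {n : ℕ} {e : MSTEntry} (h : e.valid n) : 1 ≤ e.val := by
  cases e <;> simp [valid, val] at * <;> omega

theorem MSTEntry.valid_of {n : ℕ} (e : MSTEntry) (hval : 1 ≤ e.val)
    (hn : ∀ k, (e = .unmarked k ∨ e = .prime k) → k ≤ n) : e.valid n := by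
  cases e <;> simp_all [val, valid]

theorem MSTEntry.valid_le_n {n k : ℕ} {e : MSTEntry} (h : e.valid n)
    (h2 : e = .unmarked k ∨ e = .prime k) : k ≤ n := by
  cases e <;> simp_all [valid]

def WFin (n : ℕ) : (s : ℕ) → MSTEntry → Finset (Fin s → MSTEntry)
  | 0, _ => {fun i => i.elim0}
  | s+1, ub => (allowedSet n ub).biUnion fun e =>
      (WFin n s (pred e)).image fun w => Fin.snoc w e

theorem sum_WFin_succ {M : Type*} [AddCommMonoid M] (n s : ℕ) (ub : MSTEntry)
    (F : (Fin (s+1) → MSTEntry) → M) :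
    ∑ w ∈ WFin n (s+1) ub, F w
      = ∑ e ∈ allowedSet n ub, ∑ w ∈ WFin n s (pred e), F (Fin.snoc w e) := by
  rw [WFin, Finset.sum_biUnion]
  · exact Finset.sum_congr rfl fun e _ => Finset.sum_image fun w _ w' _ h => by
      funext j
      have h2 := congrFun h (Fin.castSucc j)
      rwa [Fin.snoc_castSucc, Fin.snoc_castSucc] at h2
  · intro e he e' he' hne
    show Disjoint _ _
    rw [Finset.disjoint_left]
    intro g hg hg'
    rw [Finset.mem_image] at hg hg'
    obtain ⟨u, _, rfl⟩ := hg
    obtain ⟨u', _, h⟩ := hg'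
    apply hne
    have h2 := congrFun h (Fin.last s)
    rw [Fin.snoc_last, Fin.snoc_last] at h2
    exact h2.symm

theorem mem_WFin {n : ℕ} {s : ℕ} {ub : MSTEntry} {w : Fin s → MSTEntry} :
    w ∈ WFin n s ub ↔
      ((∀ j : Fin s, (w j).valid n) ∧
       (∀ (a : ℕ) (h1 : a < s) (h2 : a + 1 < s), (w ⟨a, h1⟩).le (pred (w ⟨a+1, h2⟩))) ∧
       (∀ h : 0 < s, (w ⟨s-1, by omega⟩).le ub)) := by
  induction s generalizing ub with
  | zero =>
    constructor
    · intro _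
      exact ⟨fun j => j.elim0, fun a h1 h2 => by omega, fun h => by omega⟩
    · intro _
      rw [WFin, Finset.mem_singleton]
      funext i
      exact i.elim0
  | succ s ih =>
    rw [WFin]
    simp only [Finset.mem_biUnion, Finset.mem_image]
    constructor
    · rintro ⟨e, he, w', hw', rfl⟩
      rw [mem_allowedSet] at he
      obtain ⟨hv', hadj', hlast'⟩ := ih.1 hw'
      refine ⟨?_, ?_, ?_⟩
      · intro j
        induction j using Fin.lastCases with
        | last => rw [Fin.snoc_last]; exact he.1
        | cast j => rw [Fin.snoc_castSucc]; exact hv' j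
      · intro a h1 h2
        rcases Nat.lt_or_ge (a+1) s with h3 | h3
        · have e1 : (⟨a, h1⟩ : Fin (s+1)) = Fin.castSucc ⟨a, by omega⟩ := rfl
          have e2 : (⟨a+1, h2⟩ : Fin (s+1)) = Fin.castSucc ⟨a+1, h3⟩ := rfl
          rw [e1, e2, Fin.snoc_castSucc, Fin.snoc_castSucc]
          exact hadj' a _ h3
        · have ha : a + 1 = s := by omega
          have e1 : (⟨a, h1⟩ : Fin (s+1)) = Fin.castSucc ⟨a, by omega⟩ := rfl
          have e2 : (⟨a+1, h2⟩ : Fin (s+1)) = Fin.last s := Fin.ext (by simpa using ha)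
          rw [e1, e2, Fin.snoc_castSucc, Fin.snoc_last]
          have h4 := hlast' (by omega)
          have h6 : (⟨s-1, by omega⟩ : Fin s) = ⟨a, by omega⟩ := Fin.ext (by simp; omega)
          rw [h6] at h4
          exact h4
      · intro _
        have e2 : (⟨s+1-1, by omega⟩ : Fin (s+1)) = Fin.last s := rfl
        rw [e2, Fin.snoc_last]
        exact he.2
    · rintro ⟨hv, hadj, hlast⟩
      refine ⟨w (Fin.last s), ?_, Fin.init w, ?_, Fin.snoc_init_self w⟩
      · rw [mem_allowedSet]
        have e2 : (⟨s+1-1, by omega⟩ : Fin (s+1)) = Fin.last s := rfl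
        refine ⟨hv _, ?_⟩
        have := hlast (by omega)
        rwa [e2] at this
      · rw [ih]
        refine ⟨fun j => hv _, ?_, ?_⟩
        · intro a h1 h2
          exact hadj a (by omega) (by omega)
        · intro h
          have h4 := hadj (s-1) (by omega) (by omega)
          have e1 : (⟨s-1+1, by omega⟩ : Fin (s+1)) = Fin.last s := Fin.ext (by simp; omega)
          rw [e1] at h4
          exact h4
  
def Wt (x z : ℕ → R) (b : ℤ → R) (s : ℕ) (w : Fin s → MSTEntry) : R :=
  ∏ j : Fin s, mstFactor x z b (1, (j : ℕ) + 1) (w j)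

theorem Wt_snoc (x z : ℕ → R) (b : ℤ → R) (s : ℕ) (w : Fin s → MSTEntry) (e : MSTEntry) :
    Wt x z b (s+1) (Fin.snoc w e) = Wt x z b s w * mstFactor x z b (1, s+1) e := by
  rw [Wt, Fin.prod_univ_castSucc]
  congr 1
  · refine Finset.prod_congr rfl fun j _ => ?_
    rw [Fin.snoc_castSucc]
    simp
  · rw [Fin.snoc_last]
    simp

theorem wordSum_eq_Dfun (n : ℕ) (x z : ℕ → R) (b : ℤ → R) :
    ∀ (s : ℕ) (ub : MSTEntry), ∑ w ∈ WFin n s ub, Wt x z b s w = Dfun n x z b s ub := by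
  intro s
  induction s with
  | zero =>
    intro ub
    rw [WFin, Finset.sum_singleton]
    show _ = (1 : R)
    rw [Wt, Finset.prod_of_isEmpty]
  | succ s ih =>
    intro ub
    rw [sum_WFin_succ, Dfun]
    refine Finset.sum_congr rfl fun e he => ?_
    rw [← ih (pred e), Finset.mul_sum]
    refine Finset.sum_congr rfl fun w hw => ?_
    rw [Wt_snoc, mul_comm]

theorem WFin_chain {n s : ℕ} {w : Fin s → MSTEntry}
    (hv : ∀ j : Fin s, (w j).valid n)
    (hadj : ∀ (a : ℕ) (h1 : a < s) (h2 : a+1 < s), (w ⟨a,h1⟩).le (pred (w ⟨a+1,h2⟩))) :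
    ∀ (a c : ℕ) (ha : a < s) (hc : c < s), a < c → (w ⟨a,ha⟩).le (pred (w ⟨c,hc⟩)) := by
  intro a c
  induction c with
  | zero => omega
  | succ c ihc =>
    intro ha hc hac
    rcases Nat.lt_or_ge a c with h | h
    · exact MSTEntry.le_trans
        (MSTEntry.le_trans (ihc ha (by omega) h)
          (pred_le (MSTEntry.valid_val (hv ⟨c, by omega⟩))))
        (hadj c (by omega) hc)
    · have hax : a = c := by omega
      subst hax
      exact hadj a ha hc

theorem WFin_chain_le {n s : ℕ} {w : Fin s → MSTEntry}
    (hv : ∀ j : Fin s, (w j).valid n)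
    (hadj : ∀ (a : ℕ) (h1 : a < s) (h2 : a+1 < s), (w ⟨a,h1⟩).le (pred (w ⟨a+1,h2⟩))) :
    ∀ (a c : ℕ) (ha : a < s) (hc : c < s), a ≤ c → (w ⟨a,ha⟩).le (w ⟨c,hc⟩) := by
  intro a c ha hc hac
  rcases Nat.eq_or_lt_of_le hac with h | h
  · subst h
    exact MSTEntry.le_refl _
  · exact MSTEntry.le_trans (WFin_chain hv hadj a c ha hc h)
      (pred_le (MSTEntry.valid_val (hv ⟨c, hc⟩)))

def toTab (r : ℕ) (w : Fin r → MSTEntry) : ℕ × ℕ → MSTEntry := fun p =>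
  if h : p.1 = 1 ∧ 1 ≤ p.2 ∧ p.2 ≤ r then w ⟨p.2 - 1, by omega⟩ else .unmarked 0

theorem toTab_diag {r : ℕ} (w : Fin r → MSTEntry) {p : ℕ × ℕ}
    (hp : p.1 = 1 ∧ 1 ≤ p.2 ∧ p.2 ≤ r) :
    toTab r w p = w ⟨p.2 - 1, by omega⟩ := dif_pos hp

theorem toTab_mem {r : ℕ} (w : Fin r → MSTEntry) (j : Fin r) :
    toTab r w (1, (j : ℕ) + 1) = w j := by
  rw [toTab_diag w ⟨rfl, by omega, by have := j.2; omega⟩]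
  congr 1

theorem mem_shiftedDiag_one {r : ℕ} {p : ℕ × ℕ} :
    p ∈ shiftedDiag 1 (fun _ => r) ↔ p.1 = 1 ∧ 1 ≤ p.2 ∧ p.2 ≤ r := by
  simp only [shiftedDiag, Set.mem_setOf_eq]
  omega

theorem mem_shiftedDiag_one' {r i j : ℕ} :
    (i, j) ∈ shiftedDiag 1 (fun _ => r) ↔ i = 1 ∧ 1 ≤ j ∧ j ≤ r := by
  simp only [shiftedDiag, Set.mem_setOf_eq]
  omega

theorem IsMST_iff_image {n r f : ℕ} :
    {T : ℕ × ℕ → MSTEntry | IsMST n 1 (fun _ => r) (fun _ => f) T}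
      = (toTab r) '' ↑(WFin n r (.circ f)) := by
  ext T
  simp only [Set.mem_setOf_eq, Set.mem_image, Finset.mem_coe]
  constructor
  · intro hT
    obtain ⟨h1, h2, h3, h4, h5, h6, h7, h8, h9⟩ := hT
    have hmem : ∀ (j : ℕ), 1 ≤ j → j ≤ r → (1, j) ∈ shiftedDiag 1 (fun _ => r) :=
      fun j hj1 hj2 => mem_shiftedDiag_one.2 ⟨rfl, hj1, hj2⟩
    refine ⟨fun j => T (1, (j : ℕ) + 1), ?_, ?_⟩
    · rw [mem_WFin]
      refine ⟨?_, ?_, ?_⟩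
      · intro j
        have hj := hmem ((j : ℕ) + 1) (by omega) (by have := j.2; omega)
        exact MSTEntry.valid_of _ (h2 _ hj) (fun k hk => h9 _ hj k hk)
      · intro a h1a h2a
        have hm1 := hmem (a+1) (by omega) (by omega)
        have hm2 := hmem (a+2) (by omega) (by omega)
        refine (le_pred_iff (h2 _ hm1) (h2 _ hm2)).2
          ⟨h3 1 (a+1) (a+2) hm1 hm2 (by omega), ?_, ?_⟩
        · intro k k' hk hk'
          exact h6 1 (a+1) (a+2) k k' hm1 hm2 (by omega) hk hk'
        · intro k k' hk hk'
          exact h7 1 (a+1) (a+2) k k' hm1 hm2 (by omega) hk hk'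
      · intro h0
        have := h8 _ (hmem (r-1+1) (by omega) (by omega))
        exact this
    · funext p
      obtain ⟨p1, p2⟩ := p
      by_cases hp : p1 = 1 ∧ 1 ≤ p2 ∧ p2 ≤ r
      · rw [toTab_diag _ hp]
        show T (1, ((1, p2).2 - 1) + 1) = T (p1, p2)
        obtain ⟨hq, hq1, hq2⟩ := hp
        subst hq
        congr 2
        omega
      · rw [toTab, dif_neg hp, h1 (p1, p2) (fun hd => hp (mem_shiftedDiag_one.1 hd))]
  · rintro ⟨w, hw, rfl⟩
    rw [mem_WFin] at hw
    obtain ⟨hv, hadj, hlast⟩ := hw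
    have hr : ∀ p ∈ shiftedDiag 1 (fun _ => r), 0 < r :=
      fun p hp => by have := (mem_shiftedDiag_one.1 hp); omega
    refine ⟨?_, ?_, ?_, ?_, ?_, ?_, ?_, ?_, ?_⟩
    · intro p hp
      exact dif_neg (fun hc => hp (mem_shiftedDiag_one.2 hc))
    · intro p hp
      obtain hp' := mem_shiftedDiag_one.1 hp
      rw [toTab_diag _ hp']
      exact MSTEntry.valid_val (hv _)
    · intro i j j' hj hj' hjj
      obtain ⟨rfl, hd2, hd3⟩ := mem_shiftedDiag_one'.1 hj
      obtain ⟨-, hd2', hd3'⟩ := mem_shiftedDiag_one'.1 hj'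
      rw [toTab_diag _ ⟨rfl, hd2, hd3⟩, toTab_diag _ ⟨rfl, hd2', hd3'⟩]
      exact WFin_chain_le hv hadj (j-1) (j'-1) (by omega) (by omega) (by omega)
    · intro i i' j hj hj' hii
      obtain ⟨rfl, hd2, hd3⟩ := mem_shiftedDiag_one'.1 hj
      obtain ⟨rfl, -, -⟩ := mem_shiftedDiag_one'.1 hj'
      exact MSTEntry.le_refl _
    · intro i i' j k k' hj hj' hii
      obtain ⟨rfl, -, -⟩ := mem_shiftedDiag_one'.1 hj
      obtain ⟨h1', -, -⟩ := mem_shiftedDiag_one'.1 hj'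
      omega
    · intro i j j' k k' hj hj' hjj hk hk'
      obtain ⟨rfl, hd2, hd3⟩ := mem_shiftedDiag_one'.1 hj
      obtain ⟨-, hd2', hd3'⟩ := mem_shiftedDiag_one'.1 hj'
      rw [toTab_diag _ ⟨rfl, hd2, hd3⟩] at hk
      rw [toTab_diag _ ⟨rfl, hd2', hd3'⟩] at hk'
      have hch := WFin_chain hv hadj (j-1) (j'-1) (by omega) (by omega) (by omega)
      rw [hk, hk'] at hch
      have hk1 : 1 ≤ k := by
        have hval := MSTEntry.valid_val (hv ⟨j-1, by omega⟩)
        rw [hk] at hval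
        simpa [MSTEntry.val] using hval
      simp only [MSTEntry.le, MSTEntry.pred, MSTEntry.key, MSTEntry.isCirc] at hch
      omega
    · intro i j j' k k' hj hj' hjj hk hk'
      obtain ⟨rfl, hd2, hd3⟩ := mem_shiftedDiag_one'.1 hj
      obtain ⟨-, hd2', hd3'⟩ := mem_shiftedDiag_one'.1 hj'
      rw [toTab_diag _ ⟨rfl, hd2, hd3⟩] at hk
      rw [toTab_diag _ ⟨rfl, hd2', hd3'⟩] at hk'
      have hch := WFin_chain hv hadj (j-1) (j'-1) (by omega) (by omega) (by omega)
      rw [hk, hk'] at hch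
      have hk1 : 1 ≤ k' := by
        have hval := MSTEntry.valid_val (hv ⟨j'-1, by omega⟩)
        rw [hk'] at hval
        simpa [MSTEntry.val] using hval
      simp only [MSTEntry.le, MSTEntry.pred, MSTEntry.key, MSTEntry.isCirc] at hch
      omega
    · intro p hp
      obtain hd := mem_shiftedDiag_one.1 hp
      rw [toTab_diag _ hd]
      refine MSTEntry.le_trans
        (WFin_chain_le hv hadj (p.2-1) (r-1) (by omega) (by omega) (by omega)) ?_
      exact hlast (by omega)
    · intro p hp k hk
      obtain hd := mem_shiftedDiag_one.1 hp
      rw [toTab_diag _ hd] at hk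
      exact MSTEntry.valid_le_n (hv _) hk

theorem toTab_injOn {n r f : ℕ} :
    Set.InjOn (toTab r) ↑(WFin n r (.circ f)) := by
  intro w _ w' _ h
  funext j
  have h2 := congrFun h (1, (j : ℕ) + 1)
  rwa [toTab_mem, toTab_mem] at h2

theorem mstWeight_toTab (r : ℕ) (x z : ℕ → R) (b : ℤ → R) (w : Fin r → MSTEntry) :
    mstWeight 1 (fun _ => r) x z b (toTab r w) = Wt x z b r w := by
  rw [mstWeight, Finset.prod_range_one, Wt]
  rw [← Fin.prod_univ_eq_prod_range
    (fun j => mstFactor x z b (0+1, 0+1+j) (toTab r w (0+1, 0+1+j))) r]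
  refine Finset.prod_congr rfl fun j _ => ?_
  have hc : 0 + 1 + (j : ℕ) = (j : ℕ) + 1 := by omega
  rw [show (0+1, 0+1+(j:ℕ)) = (1, (j:ℕ)+1) from by rw [hc], toTab_mem]

theorem Qflag_eq_wordSum (n r f : ℕ) (x z : ℕ → R) (b : ℤ → R) :
    Qflag n 1 (fun _ => r) (fun _ => f) x z b = ∑ w ∈ WFin n r (.circ f), Wt x z b r w := by
  rw [Qflag, IsMST_iff_image, finsum_mem_image toTab_injOn, finsum_mem_coe_finset]
  exact Finset.sum_congr rfl fun w _ => mstWeight_toTab r x z b w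

end Words

end Work

/-- One-row case: the flagged factorial Q-function `Q_{(r),(f)}(x;z|b)` equals the single
generating-function coefficient `q_r^{[f|r−f−1]}(x;z|b)`, for every number `n` of
x-variables. -/
theorem statement_15 (R : Type*) [CommRing R] (n r f : ℕ) (x z : ℕ → R) (b : ℤ → R) :
    Qflag n 1 (fun _ => r) (fun _ => f) x z b =
      qC2 (r : ℤ) (f : ℤ) ((r : ℤ) - (f : ℤ) - 1) n x z (fun i => b (i : ℤ)) := by
  rw [Qflag_eq_wordSum, wordSum_eq_Dfun, Dfun_circ_eq, qC2, coeffZ_natCast]
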